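/- arXiv:math/0610226 — 7 statements merged into one kernel-verified Lean document; each statement's English description precedes it below -/
import Mathlib

section
/- Let G be a (not necessarily Hausdorff) topological group with topology γ, and H a (not necessarily closed) subgroup. Suppose γ₁ ⊆ γ is a coarser group topology on G such that γ₁ and γ induce the same subspace topology on H, and the quotient topologies γ₁/H and γ/H on the left coset space G/H coincide. Then γ₁ = γ. -/
open Pointwise

private lemma merson_aux {G : Type*} [Group G] [TopologicalSpace G] [IsTopologicalGroup G]
    {V W : Set G} (hV : IsOpen V) (hW : IsOpen W) (H : Subgroup G) :
    IsOpen ((V ∩ W) * (H : Set G)) := (hV.inter hW).mul_right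

/-- Merson's Lemma: if `γ₁ ⊆ γ` are group topologies on a group `G` (not necessarily
Hausdorff), `H` is a subgroup on which the two subspace topologies coincide, and the two
quotient topologies on the coset space `G ⧸ H` coincide, then `γ₁ = γ`. -/
theorem merson_lemma {G : Type*} [Group G] (γ γ₁ : TopologicalSpace G)
    (hγ : @IsTopologicalGroup G γ _) (hγ₁ : @IsTopologicalGroup G γ₁ _)
    (H : Subgroup G)
    (hcoarser : γ ≤ γ₁)
    (hsub : γ₁.induced ((↑) : H → G) = γ.induced ((↑) : H → G))
    (hquot : γ₁.coinduced (QuotientGroup.mk : G → G ⧸ H) =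
      γ.coinduced (QuotientGroup.mk : G → G ⧸ H)) :
    γ₁ = γ := by
  refine IsTopologicalGroup.ext hγ₁ hγ (le_antisymm ?_ (nhds_mono hcoarser))
  intro U hU
  -- get a γ-open V with 1 ∈ V and V * V ⊆ U
  obtain ⟨V, hVo, hV1, hVU⟩ :=
    @exists_open_nhds_one_mul_subset G γ _ hγ.toContinuousMul U hU
  -- V ∩ H is open in the subspace topology, which is the same for γ and γ₁,
  -- so there is a γ₁-open W with W ∩ H = V ∩ H
  have hVH : @IsOpen H (γ.induced ((↑) : H → G)) (((↑) : H → G) ⁻¹' V) :=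
    ⟨V, hVo, rfl⟩
  rw [← hsub] at hVH
  obtain ⟨W, hWo, hWV⟩ := hVH
  -- hWV : (↑) ⁻¹' W = (↑) ⁻¹' V
  letI := γ₁
  have hW1 : (1 : G) ∈ W := by
    have : ((⟨1, H.one_mem⟩ : H) : G) ∈ V := hV1
    have := hWV ▸ (Set.mem_preimage.mpr this : (⟨1, H.one_mem⟩ : H) ∈ ((↑) : H → G) ⁻¹' V)
    exact this
  -- pick a γ₁-open W₂ with 1 ∈ W₂ and W₂ * W₂ ⊆ W
  obtain ⟨W₂, hW₂o, hW₂1, hW₂W⟩ := exists_open_nhds_one_mul_subset (hWo.mem_nhds hW1)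
  set W₁ : Set G := W₂ ∩ W₂⁻¹ with hW₁def
  have hW₁o : IsOpen W₁ := hW₂o.inter hW₂o.inv
  have hW₁1 : (1 : G) ∈ W₁ := ⟨hW₂1, by simpa using hW₂1⟩
  -- the saturated set S = (V ∩ W₁) * H
  set S : Set G := (V ∩ W₁) * (H : Set G) with hSdef
  have hSoγ : @IsOpen G γ S :=
    @merson_aux G _ γ hγ V W₁ hVo (hW₁o.mono hcoarser) H
  -- S is saturated: mk ⁻¹' (mk '' S) = S
  have hsat : (QuotientGroup.mk : G → G ⧸ H) ⁻¹' (QuotientGroup.mk '' S) = S := by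
    rw [QuotientGroup.preimage_image_mk_eq_mul, hSdef, mul_assoc]
    congr 1
    exact coe_mul_coe H
  -- hence S is γ₁-open
  have hSo : IsOpen S := by
    have h1 : @IsOpen (G ⧸ H) (γ.coinduced QuotientGroup.mk) (QuotientGroup.mk '' S) := by
      rw [isOpen_coinduced, hsat]; exact hSoγ
    rw [← hquot] at h1
    rw [isOpen_coinduced, hsat] at h1
    exact h1
  -- S ∩ W₁ is a γ₁-neighbourhood of 1 contained in U
  refine Filter.mem_of_superset ((hSo.inter hW₁o).mem_nhds ?_) ?_
  · exact ⟨⟨1, ⟨hV1, hW₁1⟩, 1, H.one_mem, mul_one 1⟩, hW₁1⟩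
  · rintro x ⟨⟨a, ⟨haV, haW₁⟩, h, hhH, rfl⟩, hxW₁⟩
    have hih : a⁻¹ * (a * h) ∈ W := by
      refine hW₂W ⟨a⁻¹, ?_, a * h, hxW₁.1, rfl⟩
      simpa using haW₁.2
    have hhW : h ∈ W := by simpa using hih
    have hhV : h ∈ V := by
      have : (⟨h, hhH⟩ : H) ∈ ((↑) : H → G) ⁻¹' W := hhW
      rw [hWV] at this
      exact this
    exact hVU ⟨a, haV, h, hhV, rfl⟩
end

section
/- Let P = X ⋊_α G be a topological semidirect product with topology γ, and suppose X is G-minimal with respect to α (i.e., there is no strictly coarser Hausdorff group topology τ' on X such that α : G × (X,τ') → (X,τ') remains continuous). Then for every coarser Hausdorff group topology γ₁ ⊆ γ on P, the restrictions satisfy γ₁|_X = γ|_X. -/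
/-- The product topology on the semidirect product `X ⋊[φ] G`. -/
def sdpTopology {X G : Type*} [Group X] [Group G] [TopologicalSpace X] [TopologicalSpace G]
    (φ : G →* MulAut X) : TopologicalSpace (X ⋊[φ] G) :=
  TopologicalSpace.induced (fun p : X ⋊[φ] G => (p.left, p.right)) inferInstance

/-- If `X` is `G`-minimal with respect to a continuous action `φ` by automorphisms, then
every coarser Hausdorff group topology `γ₁` on the topological semidirect product
`P = X ⋊ G` induces on `X` (embedded via `inl`) the same topology as the product
topology `γ`. -/
theorem restriction_eq_of_G_minimal {X G : Type*} [Group X] [Group G]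
    [tX : TopologicalSpace X] [tG : TopologicalSpace G]
    [IsTopologicalGroup X] [IsTopologicalGroup G]
    (φ : G →* MulAut X)
    (hact : Continuous fun p : G × X => φ p.1 p.2)
    (hGmin : ∀ tX' : TopologicalSpace X, @IsTopologicalGroup X tX' _ → @T2Space X tX' →
      tX ≤ tX' →
      (@Continuous (G × X) X (@instTopologicalSpaceProd G X tG tX') tX'
        fun p => φ p.1 p.2) → tX' = tX)
    (γ₁ : TopologicalSpace (X ⋊[φ] G))
    (hγ₁grp : @IsTopologicalGroup (X ⋊[φ] G) γ₁ _)
    (hγ₁T2 : @T2Space (X ⋊[φ] G) γ₁)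
    (hcoarser : sdpTopology φ ≤ γ₁) :
    γ₁.induced ⇑(SemidirectProduct.inl : X →* X ⋊[φ] G) =
      (sdpTopology φ).induced ⇑(SemidirectProduct.inl : X →* X ⋊[φ] G) := by
  -- The product topology restricted to `X` is just `tX`.
  have hkey : (sdpTopology φ).induced ⇑(SemidirectProduct.inl : X →* X ⋊[φ] G) = tX := by
    rw [sdpTopology, induced_compose]
    show TopologicalSpace.induced (fun x : X => ((x, 1) : X × G)) _ = tX
    rw [instTopologicalSpaceProd, induced_inf, induced_compose, induced_compose]
    show TopologicalSpace.induced (fun x : X => x) tX ⊓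
        TopologicalSpace.induced (fun _ : X => (1 : G)) tG = tX
    rw [show (fun x : X => x) = id from rfl, induced_id, induced_const, inf_top_eq]
  rw [hkey]
  have hinr : @Continuous G (X ⋊[φ] G) tG γ₁ fun g => (SemidirectProduct.inr g : X ⋊[φ] G) := by
    refine continuous_le_rng hcoarser ?_
    rw [sdpTopology]
    exact continuous_induced_rng.2 (continuous_const.prodMk continuous_id)
  set tX' : TopologicalSpace X :=
    γ₁.induced ⇑(SemidirectProduct.inl : X →* X ⋊[φ] G) with htX'
  -- `tX'` is a group topology.
  have hgrp : @IsTopologicalGroup X tX' _ := by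
    letI := γ₁; haveI := hγ₁grp
    exact topologicalGroup_induced (SemidirectProduct.inl : X →* X ⋊[φ] G)
  -- `tX'` is Hausdorff.
  have hT2 : @T2Space X tX' := by
    letI := tX'; letI := γ₁; haveI := hγ₁T2
    exact Topology.IsEmbedding.t2Space
      (Y := X ⋊[φ] G) (f := ⇑(SemidirectProduct.inl : X →* X ⋊[φ] G))
      ⟨⟨rfl⟩, SemidirectProduct.inl_injective⟩
  -- `tX'` is coarser than `tX`.
  have hle : tX ≤ tX' := by
    rw [htX', ← hkey]
    exact induced_mono hcoarser
  -- the action remains continuous w.r.t. `tX'`, via conjugation in `P`.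
  have hcont : @Continuous (G × X) X (@instTopologicalSpaceProd G X tG tX') tX'
      fun p => φ p.1 p.2 := by
    letI : TopologicalSpace X := tX'
    letI : TopologicalSpace (X ⋊[φ] G) := γ₁
    haveI := hγ₁grp
    apply continuous_induced_rng.2
    have h1 : Continuous (fun p : G × X => (SemidirectProduct.inl p.2 : X ⋊[φ] G)) :=
      continuous_induced_dom.comp continuous_snd
    have h2 : Continuous (fun p : G × X => (SemidirectProduct.inr p.1 : X ⋊[φ] G)) :=
      hinr.comp continuous_fst
    have : Continuous (fun p : G × X =>
        (SemidirectProduct.inr p.1 * SemidirectProduct.inl p.2 *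
          (SemidirectProduct.inr p.1)⁻¹ : X ⋊[φ] G)) :=
      (h2.mul h1).mul h2.inv
    convert this using 1
    funext p
    simp only [Function.comp, ← map_inv]
    exact SemidirectProduct.inl_aut p.1 p.2
  exact hGmin tX' hgrp hT2 hle hcont
end

section
/- Let G be a Hausdorff topological group and X an abelian G-group (G acts continuously by automorphisms). If X is G-minimal and the action is topologically exact, then the topological semidirect product X ⋊ G is a minimal topological group. -/
open Topology SemidirectProduct

private lemma aux_coinduced_isOpenQuotientMap {A B : Type*} [Group A] [Group B]
    [tA : TopologicalSpace A] [IsTopologicalGroup A] (f : A →* B)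
    (hf : Function.Surjective f) :
    @IsOpenQuotientMap A B tA (tA.coinduced f) f := by
  letI tB := tA.coinduced ⇑f
  refine ⟨hf, continuous_coinduced_rng, fun U hU => ?_⟩
  have key : ⇑f ⁻¹' (⇑f '' U) = ⋃ k : f.ker, (fun a => a * (k : A)) '' U := by
    ext a
    simp only [Set.mem_preimage, Set.mem_image, Set.mem_iUnion]
    constructor
    · rintro ⟨u, hu, huv⟩
      refine ⟨⟨u⁻¹ * a, ?_⟩, u, hu, by group⟩
      simp [MonoidHom.mem_ker, map_mul, huv]
    · rintro ⟨k, u, hu, rfl⟩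
      have hk : f (k : A) = 1 := k.2
      exact ⟨u, hu, by simp [map_mul, hk]⟩
  have : IsOpen (⇑f ⁻¹' (⇑f '' U)) := by
    rw [key]
    exact isOpen_iUnion fun k => (Homeomorph.mulRight (k : A)).isOpenMap U hU
  exact this

private lemma aux_coinduced_topologicalGroup {A B : Type*} [Group A] [Group B]
    [tA : TopologicalSpace A] [IsTopologicalGroup A] (f : A →* B)
    (hf : Function.Surjective f) :
    @IsTopologicalGroup B (tA.coinduced f) _ := by
  letI tB := tA.coinduced ⇑f
  have hq := aux_coinduced_isOpenQuotientMap f hf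
  have hqq : IsOpenQuotientMap (Prod.map ⇑f ⇑f) :=
    ⟨hq.surjective.prodMap hq.surjective, hq.continuous.prodMap hq.continuous,
      hq.isOpenMap.prodMap hq.isOpenMap⟩
  refine { continuous_mul := ?_, continuous_inv := ?_ }
  · rw [← hqq.continuous_comp_iff]
    have h1 : ((fun p : B × B => p.1 * p.2) ∘ Prod.map ⇑f ⇑f)
        = ⇑f ∘ fun p : A × A => p.1 * p.2 := by
      funext p; simp [map_mul]
    rw [h1]
    exact hq.continuous.comp continuous_mul
  · rw [← hq.continuous_comp_iff]
    have h1 : ((fun b : B => b⁻¹) ∘ ⇑f) = ⇑f ∘ fun a : A => a⁻¹ := by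
      funext a; simp
    rw [h1]
    exact hq.continuous.comp continuous_inv

private lemma aux_conj {X G : Type*} [CommGroup X] [Group G] (φ : G →* MulAut X)
    (s : X ⋊[φ] G) (x : X) :
    s * inl x * s⁻¹ = inl (φ s.right x) := by
  ext
  · simp [mul_comm, mul_assoc, mul_left_comm]
  · simp


/-- Let a Hausdorff topological group `G` act continuously by automorphisms on an
abelian Hausdorff topological group `X`. If `X` is `G`-minimal and the action is
topologically exact, then the topological semidirect product `X ⋊ G` is a minimal
topological group. -/
theorem minimal_semidirectProduct {X G : Type*} [CommGroup X] [Group G]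
    [tX : TopologicalSpace X] [tG : TopologicalSpace G]
    [IsTopologicalGroup X] [IsTopologicalGroup G] [T2Space X] [T2Space G]
    (φ : G →* MulAut X)
    (hact : Continuous fun p : G × X => φ p.1 p.2)
    (hGmin : ∀ tX' : TopologicalSpace X, @IsTopologicalGroup X tX' _ → @T2Space X tX' →
      tX ≤ tX' →
      (@Continuous (G × X) X (@instTopologicalSpaceProd G X tG tX') tX'
        fun p => φ p.1 p.2) → tX' = tX)
    (htexact : ∀ tG' : TopologicalSpace G, @IsTopologicalGroup G tG' _ → tG ≤ tG' →
      (@Continuous (G × X) X (@instTopologicalSpaceProd G X tG' tX) tX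
        fun p => φ p.1 p.2) → tG' = tG) :
    ∀ t : TopologicalSpace (X ⋊[φ] G), @IsTopologicalGroup (X ⋊[φ] G) t _ →
      @T2Space (X ⋊[φ] G) t → sdpTopology φ ≤ t → t = sdpTopology φ := by
  intro t ht htt hle
  letI := t
  letI := ht
  letI := htt
  -- continuity of the canonical inclusions w.r.t. `t`
  have hidc : Continuous[sdpTopology φ, t] id := continuous_id_iff_le.mpr hle
  have hcX : Continuous (⇑(inl : X →* X ⋊[φ] G)) := by
    have h1 : @Continuous X (X ⋊[φ] G) tX (sdpTopology φ) (⇑(inl : X →* X ⋊[φ] G)) := by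
      unfold sdpTopology
      exact continuous_induced_rng.mpr (continuous_id.prodMk continuous_const)
    exact @Continuous.comp X (X ⋊[φ] G) (X ⋊[φ] G) tX (sdpTopology φ) t _ _ hidc h1
  have hcG : Continuous (⇑(inr : G →* X ⋊[φ] G)) := by
    have h1 : @Continuous G (X ⋊[φ] G) tG (sdpTopology φ) (⇑(inr : G →* X ⋊[φ] G)) := by
      unfold sdpTopology
      exact continuous_induced_rng.mpr (continuous_const.prodMk continuous_id)
    exact @Continuous.comp G (X ⋊[φ] G) (X ⋊[φ] G) tG (sdpTopology φ) t _ _ hidc h1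
  -- Step 1: the topology induced on `X` by `t` is `tX`
  have hX : t.induced ⇑(inl : X →* X ⋊[φ] G) = tX := by
    apply hGmin
    · exact topologicalGroup_induced (inl : X →* X ⋊[φ] G)
    · letI tX' := t.induced ⇑(inl : X →* X ⋊[φ] G)
      have hemb : IsEmbedding (⇑(inl : X →* X ⋊[φ] G)) := ⟨⟨rfl⟩, inl_injective⟩
      exact hemb.t2Space
    · exact continuous_iff_le_induced.mp hcX
    · letI tX' := t.induced ⇑(inl : X →* X ⋊[φ] G)
      apply continuous_induced_rng.mpr
      show Continuous fun p : G × X => (inl (φ p.1 p.2) : X ⋊[φ] G)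
      have h1 : (fun p : G × X => (inl (φ p.1 p.2) : X ⋊[φ] G))
          = fun p : G × X => inr p.1 * inl p.2 * (inr p.1)⁻¹ := by
        funext p
        rw [inl_aut, map_inv]
      rw [h1]
      exact ((hcG.comp continuous_fst).mul
        ((continuous_induced_dom).comp continuous_snd)).mul (hcG.comp continuous_fst).inv
  -- key continuity: F : (S,t) × (X,tX) → (X,tX)
  have hF : Continuous fun p : (X ⋊[φ] G) × X => φ (rightHom p.1) p.2 := by
    have h3 : @Continuous ((X ⋊[φ] G) × X) X _
        (t.induced ⇑(inl : X →* X ⋊[φ] G))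
        (fun p => φ (rightHom p.1) p.2) := by
      apply continuous_induced_rng.mpr
      show Continuous fun p : (X ⋊[φ] G) × X => (inl (φ (rightHom p.1) p.2) : X ⋊[φ] G)
      have h1 : (fun p : (X ⋊[φ] G) × X => (inl (φ (rightHom p.1) p.2) : X ⋊[φ] G))
          = fun p : (X ⋊[φ] G) × X => p.1 * inl p.2 * p.1⁻¹ := by
        funext p
        exact (aux_conj φ p.1 p.2).symm
      rw [h1]
      exact (continuous_fst.mul (hcX.comp continuous_snd)).mul continuous_fst.inv
    rwa [hX] at h3
  -- Step 2: the topology coinduced on `G` by `t` is `tG`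
  have hπs : Function.Surjective ⇑(rightHom : X ⋊[φ] G →* G) := rightHom_surjective
  have hGq : t.coinduced ⇑(rightHom : X ⋊[φ] G →* G) = tG := by
    apply htexact
    · exact aux_coinduced_topologicalGroup rightHom hπs
    · rw [← @continuous_id_iff_le G tG]
      have h1 : (id : G → G) = ⇑(rightHom : X ⋊[φ] G →* G) ∘ ⇑(inr : G →* X ⋊[φ] G) := by
        funext g; simp
      rw [h1]
      exact @Continuous.comp G (X ⋊[φ] G) G tG t
        (t.coinduced ⇑(rightHom : X ⋊[φ] G →* G)) _ _
        (@continuous_coinduced_rng _ _ ⇑(rightHom : X ⋊[φ] G →* G) t) hcG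
    · letI tG' := t.coinduced ⇑(rightHom : X ⋊[φ] G →* G)
      have hq : IsOpenQuotientMap ⇑(rightHom : X ⋊[φ] G →* G) :=
        aux_coinduced_isOpenQuotientMap rightHom hπs
      have hqq : IsOpenQuotientMap (Prod.map ⇑(rightHom : X ⋊[φ] G →* G) (id : X → X)) :=
        ⟨hq.surjective.prodMap Function.surjective_id,
          hq.continuous.prodMap continuous_id, hq.isOpenMap.prodMap IsOpenMap.id⟩
      rw [← hqq.continuous_comp_iff]
      exact hF
  -- Step 3: t is finer than the product topology
  have hπc : Continuous (⇑(rightHom : X ⋊[φ] G →* G)) := by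
    rw [← hGq]; exact continuous_coinduced_rng
  have hleft : Continuous fun s : X ⋊[φ] G => s.left := by
    have h3 : @Continuous (X ⋊[φ] G) X t
        (t.induced ⇑(inl : X →* X ⋊[φ] G)) (fun s => s.left) := by
      apply continuous_induced_rng.mpr
      show Continuous fun s : X ⋊[φ] G => (inl s.left : X ⋊[φ] G)
      have h1 : (fun s : X ⋊[φ] G => (inl s.left : X ⋊[φ] G))
          = fun s : X ⋊[φ] G => s * (inr (rightHom s))⁻¹ := by
        funext s
        show (inl s.left : X ⋊[φ] G) = s * (inr s.right)⁻¹
        rw [eq_mul_inv_iff_mul_eq]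
        exact inl_left_mul_inr_right s
      rw [h1]
      exact continuous_id.mul (hcG.comp hπc).inv
    rwa [hX] at h3
  refine le_antisymm ?_ hle
  rw [← continuous_id_iff_le]
  apply continuous_induced_rng.mpr
  show Continuous fun s : X ⋊[φ] G => (s.left, s.right)
  exact hleft.prodMk hπc
end

section
/- Let ω : V × W → ℝ be a continuous bilinear map between normed spaces, and let h₁ : G → Iso(V) be a co-representation and h₂ : G → Iso(W) a representation of a topological group G by linear isometries, forming a co-birepresentation: ω(vg, ψ) = ω(v, gψ) for all g, v, ψ. If v ∈ V and ψ ∈ W are G-continuous vectors (their orbit maps G → V, G → W are norm continuous), then the matrix coefficient m_{v,ψ} : G → ℝ, g ↦ ω(vg, ψ), is bounded and both left and right uniformly continuous on G. -/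
/-- A continuous bilinear form on normed spaces is bounded. -/
lemma aux_bilinear_bound {V W : Type*}
    [NormedAddCommGroup V] [NormedSpace ℝ V]
    [NormedAddCommGroup W] [NormedSpace ℝ W]
    (ω : V →ₗ[ℝ] W →ₗ[ℝ] ℝ)
    (hω : Continuous fun p : V × W => ω p.1 p.2) :
    ∃ C : ℝ, 0 ≤ C ∧ ∀ x y, |ω x y| ≤ C * ‖x‖ * ‖y‖ := by
  have h : Filter.Tendsto (fun p : V × W => ω p.1 p.2) (nhds (0, 0)) (nhds 0) := by
    simpa using hω.tendsto ((0 : V), (0 : W))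
  obtain ⟨ε, hε, hball⟩ := Metric.mem_nhds_iff.mp (h (Metric.ball_mem_nhds (0:ℝ) one_pos))
  refine ⟨4 / ε ^ 2, by positivity, fun x y => ?_⟩
  rcases eq_or_ne x 0 with rfl | hx
  · simp
  rcases eq_or_ne y 0 with rfl | hy
  · simp
  have hxn : 0 < ‖x‖ := norm_pos_iff.mpr hx
  have hyn : 0 < ‖y‖ := norm_pos_iff.mpr hy
  set a : ℝ := ε / 2 / ‖x‖ with ha
  set b : ℝ := ε / 2 / ‖y‖ with hb
  have ha0 : 0 < a := by positivity
  have hb0 : 0 < b := by positivity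
  have hmem : (a • x, b • y) ∈ Metric.ball ((0 : V), (0 : W)) ε := by
    rw [Metric.mem_ball, Prod.dist_eq]
    have hax : ‖a • x‖ = ε / 2 := by
      rw [norm_smul, Real.norm_of_nonneg ha0.le, ha, div_mul_cancel₀ _ hxn.ne']
    have hby : ‖b • y‖ = ε / 2 := by
      rw [norm_smul, Real.norm_of_nonneg hb0.le, hb, div_mul_cancel₀ _ hyn.ne']
    apply max_lt <;> rw [dist_zero_right] <;> [rw [hax]; rw [hby]] <;> linarith
  have h1 : |ω (a • x) (b • y)| < 1 := by
    have := hball hmem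
    rw [Set.mem_preimage, Metric.mem_ball, Real.dist_eq, sub_zero] at this
    exact this
  have heq : ω (a • x) (b • y) = a * b * ω x y := by
    simp [map_smul, smul_eq_mul]; ring
  rw [heq, abs_mul, abs_mul, abs_of_pos ha0, abs_of_pos hb0] at h1
  have h2 : ε * ε * |ω x y| ≤ 4 * (‖x‖ * ‖y‖) := by
    rw [ha, hb] at h1
    rw [div_mul_div_comm, div_mul_eq_mul_div, div_lt_one (by positivity)] at h1
    nlinarith
  rw [div_mul_eq_mul_div, div_mul_eq_mul_div, le_div_iff₀ (by positivity)]
  nlinarith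

/-- Bicontinuous matrix coefficients of a co-birepresentation of `G` in a continuous
bilinear map `ω : V × W → ℝ` are bounded and both left and right uniformly
continuous on `G`. -/
theorem matrix_coefficient_uniformly_continuous {G V W : Type*}
    [Group G] [TopologicalSpace G] [IsTopologicalGroup G]
    [NormedAddCommGroup V] [NormedSpace ℝ V]
    [NormedAddCommGroup W] [NormedSpace ℝ W]
    (ω : V →ₗ[ℝ] W →ₗ[ℝ] ℝ)
    (hω : Continuous fun p : V × W => ω p.1 p.2)
    (h₁ : G → V ≃ₗᵢ[ℝ] V) (h₂ : G → W ≃ₗᵢ[ℝ] W)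
    (h₁anti : ∀ (g₁ g₂ : G) (x : V), h₁ (g₁ * g₂) x = h₁ g₂ (h₁ g₁ x))
    (h₁one : ∀ x : V, h₁ 1 x = x)
    (h₂hom : ∀ (g₁ g₂ : G) (y : W), h₂ (g₁ * g₂) y = h₂ g₁ (h₂ g₂ y))
    (h₂one : ∀ y : W, h₂ 1 y = y)
    (hinv : ∀ (g : G) (x : V) (y : W), ω (h₁ g x) y = ω x (h₂ g y))
    (v : V) (ψ : W)
    (hv : Continuous fun g : G => h₁ g v)
    (hψ : Continuous fun g : G => h₂ g ψ) :
    (∃ C : ℝ, ∀ g : G, |ω (h₁ g v) ψ| ≤ C) ∧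
    (∀ ε > (0 : ℝ), ∃ U ∈ nhds (1 : G), ∀ u ∈ U, ∀ g : G,
        |ω (h₁ (u * g) v) ψ - ω (h₁ g v) ψ| < ε) ∧
    (∀ ε > (0 : ℝ), ∃ U ∈ nhds (1 : G), ∀ u ∈ U, ∀ g : G,
        |ω (h₁ (g * u) v) ψ - ω (h₁ g v) ψ| < ε) := by
  obtain ⟨C, hC0, hC⟩ := aux_bilinear_bound ω hω
  refine ⟨⟨C * ‖v‖ * ‖ψ‖, fun g => ?_⟩, ?_, ?_⟩
  · calc |ω (h₁ g v) ψ| ≤ C * ‖h₁ g v‖ * ‖ψ‖ := hC _ _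
      _ = C * ‖v‖ * ‖ψ‖ := by rw [(h₁ g).norm_map]
  · intro ε hε
    have key : ∀ u g : G, ω (h₁ (u * g) v) ψ - ω (h₁ g v) ψ
        = ω (h₁ u v - v) (h₂ g ψ) := by
      intro u g
      simp only [h₁anti, map_sub, LinearMap.sub_apply, hinv]
    obtain ⟨δ, hδ0, hδ⟩ : ∃ δ > 0, C * δ * ‖ψ‖ < ε := by
      rcases le_or_gt (C * ‖ψ‖) 0 with h | h
      · exact ⟨1, one_pos, by nlinarith⟩
      · refine ⟨ε / (2 * (C * ‖ψ‖)), by positivity, ?_⟩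
        rw [show C * (ε / (2 * (C * ‖ψ‖))) * ‖ψ‖ = ε / 2 * ((C * ‖ψ‖) / (C * ‖ψ‖)) by ring,
          div_self h.ne']
        linarith
    have hc : Filter.Tendsto (fun u : G => ‖h₁ u v - v‖) (nhds 1) (nhds 0) := by
      have hcont : Continuous fun u : G => ‖h₁ u v - v‖ := (hv.sub continuous_const).norm
      have := hcont.tendsto 1
      simpa [h₁one] using this
    have hmem : {u : G | ‖h₁ u v - v‖ < δ} ∈ nhds (1 : G) := hc (Iio_mem_nhds hδ0)
    refine ⟨_, hmem, fun u hu g => ?_⟩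
    rw [key]
    calc |ω (h₁ u v - v) (h₂ g ψ)| ≤ C * ‖h₁ u v - v‖ * ‖h₂ g ψ‖ := hC _ _
      _ = C * ‖h₁ u v - v‖ * ‖ψ‖ := by rw [(h₂ g).norm_map]
      _ ≤ C * δ * ‖ψ‖ := by gcongr; exact le_of_lt hu
      _ < ε := hδ
  · intro ε hε
    have key : ∀ u g : G, ω (h₁ (g * u) v) ψ - ω (h₁ g v) ψ
        = ω (h₁ g v) (h₂ u ψ - ψ) := by
      intro u g
      simp only [h₁anti, map_sub, hinv]
    obtain ⟨δ, hδ0, hδ⟩ : ∃ δ > 0, C * ‖v‖ * δ < ε := by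
      rcases le_or_gt (C * ‖v‖) 0 with h | h
      · exact ⟨1, one_pos, by nlinarith⟩
      · refine ⟨ε / (2 * (C * ‖v‖)), by positivity, ?_⟩
        rw [show C * ‖v‖ * (ε / (2 * (C * ‖v‖))) = ε / 2 * ((C * ‖v‖) / (C * ‖v‖)) by ring,
          div_self h.ne']
        linarith
    have hc : Filter.Tendsto (fun u : G => ‖h₂ u ψ - ψ‖) (nhds 1) (nhds 0) := by
      have hcont : Continuous fun u : G => ‖h₂ u ψ - ψ‖ := (hψ.sub continuous_const).norm
      have := hcont.tendsto 1
      simpa [h₂one] using this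
    have hmem : {u : G | ‖h₂ u ψ - ψ‖ < δ} ∈ nhds (1 : G) := hc (Iio_mem_nhds hδ0)
    refine ⟨_, hmem, fun u hu g => ?_⟩
    rw [key]
    calc |ω (h₁ g v) (h₂ u ψ - ψ)| ≤ C * ‖h₁ g v‖ * ‖h₂ u ψ - ψ‖ := hC _ _
      _ = C * ‖v‖ * ‖h₂ u ψ - ψ‖ := by rw [(h₁ g).norm_map]
      _ ≤ C * ‖v‖ * δ := by gcongr; exact le_of_lt hu
      _ < ε := hδ
end

section
/- Let G act continuously on a normed space V from the right by linear isometries, and let x₀ ∈ V*. If each M_n ⊆ V (n ∈ ℕ) is SUC-small at x₀ and (δ_n) is a sequence of positive reals with δ_n → 0, then ⋂_{n∈ℕ} (M_n + δ_n B_V) is SUC-small at x₀. -/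
open Pointwise

/-- If each `Mₙ ⊆ V` is SUC-small at `x₀ ∈ V*` (for a continuous right action of `G` on
`V` by linear isometries) and `δₙ → 0` with `δₙ > 0`, then `⋂ₙ (Mₙ + δₙ·B_V)` is
SUC-small at `x₀`. -/
theorem SUCsmall_iInter_add_ball {G V : Type*}
    [Group G] [TopologicalSpace G] [IsTopologicalGroup G]
    [NormedAddCommGroup V] [NormedSpace ℝ V]
    (h : G → V ≃ₗᵢ[ℝ] V)
    (hanti : ∀ (g₁ g₂ : G) (x : V), h (g₁ * g₂) x = h g₂ (h g₁ x))
    (hone : ∀ x : V, h 1 x = x)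
    (hcont : Continuous fun p : G × V => h p.1 p.2)
    (x₀ : V →L[ℝ] ℝ)
    (M : ℕ → Set V)
    (hM : ∀ n, ∀ ε > (0 : ℝ), ∃ U ∈ nhds (1 : G), ∀ u ∈ U, ∀ v ∈ M n,
      |x₀ (h u v) - x₀ v| ≤ ε)
    (δ : ℕ → ℝ) (hδpos : ∀ n, 0 < δ n)
    (hδ : Filter.Tendsto δ Filter.atTop (nhds 0)) :
    ∀ ε > (0 : ℝ), ∃ U ∈ nhds (1 : G), ∀ u ∈ U,
      ∀ w ∈ ⋂ n, (M n + Metric.closedBall (0 : V) (δ n)),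
        |x₀ (h u w) - x₀ w| ≤ ε := by
  intro ε hε
  set C : ℝ := ‖x₀‖ with hC
  have hCpos : 0 < C + 1 := by positivity
  have hsmall : 0 < ε / (4 * (C + 1)) := by positivity
  obtain ⟨n, hn⟩ := (Metric.tendsto_atTop.1 hδ (ε / (4 * (C + 1))) hsmall) |>.imp
    (fun n hn => hn n le_rfl)
  rw [Real.dist_eq, sub_zero, abs_of_pos (hδpos n)] at hn
  obtain ⟨U, hU, hUprop⟩ := hM n (ε / 2) (by positivity)
  refine ⟨U, hU, fun u hu w hw => ?_⟩
  have hw' : w ∈ M n + Metric.closedBall (0 : V) (δ n) := Set.mem_iInter.1 hw n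
  obtain ⟨v, hv, b, hb, rfl⟩ := hw'
  rw [Metric.mem_closedBall, dist_zero_right] at hb
  have hlin : x₀ (h u (v + b)) - x₀ (v + b)
      = (x₀ (h u v) - x₀ v) + (x₀ (h u b) - x₀ b) := by
    rw [map_add (h u), map_add x₀, map_add x₀]; ring
  have hbound : ∀ z : V, ‖z‖ ≤ δ n → |x₀ z| ≤ C * δ n := fun z hz =>
    le_trans (x₀.le_opNorm z) (by
      exact mul_le_mul_of_nonneg_left hz (norm_nonneg x₀))
  have h1 : |x₀ (h u v) - x₀ v| ≤ ε / 2 := hUprop u hu v hv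
  have h2 : |x₀ (h u b)| ≤ C * δ n := hbound _ (by rw [(h u).norm_map]; exact hb)
  have h3 : |x₀ b| ≤ C * δ n := hbound _ hb
  have hCδ : C * δ n ≤ (C + 1) * (ε / (4 * (C + 1))) := by
    apply mul_le_mul (by linarith) hn.le (hδpos n).le hCpos.le
  have hCδ' : C * δ n ≤ ε / 4 := by
    rw [mul_div_assoc'] at hCδ
    calc C * δ n ≤ (C + 1) * ε / (4 * (C + 1)) := hCδ
      _ = ε / 4 := by field_simp
  calc |x₀ (h u (v + b)) - x₀ (v + b)|
      ≤ |x₀ (h u v) - x₀ v| + |x₀ (h u b) - x₀ b| := by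
        rw [hlin]; exact abs_add_le _ _
    _ ≤ ε / 2 + (|x₀ (h u b)| + |x₀ b|) := by
        have := abs_sub (x₀ (h u b)) (x₀ b)
        linarith [abs_sub_abs_le_abs_sub (x₀ (h u b)) (x₀ b), abs_sub (x₀ (h u b)) (x₀ b)]
    _ ≤ ε / 2 + (ε / 4 + ε / 4) := by linarith
    _ = ε := by ring
end

section
/- Let G act continuously on normed spaces V and E from the right by linear isometries, and let γ : V → E be a continuous linear G-equivariant map. If M ⊆ E is SUC-small at ψ ∈ E*, then γ⁻¹(M) ⊆ V is SUC-small at γ*(ψ) ∈ V*, where γ* is the adjoint operator. -/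
/-- If `γ : V → E` is a continuous linear `G`-equivariant map between normed right
`G`-spaces (actions by linear isometries) and `M ⊆ E` is SUC-small at `ψ ∈ E*`, then
`γ⁻¹(M) ⊆ V` is SUC-small at the adjoint vector `γ*(ψ) = ψ ∘ γ ∈ V*`. -/
theorem SUCsmall_preimage {G V E : Type*}
    [Group G] [TopologicalSpace G] [IsTopologicalGroup G]
    [NormedAddCommGroup V] [NormedSpace ℝ V]
    [NormedAddCommGroup E] [NormedSpace ℝ E]
    (hV : G → V ≃ₗᵢ[ℝ] V) (hE : G → E ≃ₗᵢ[ℝ] E)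
    (hVanti : ∀ (g₁ g₂ : G) (x : V), hV (g₁ * g₂) x = hV g₂ (hV g₁ x))
    (hVone : ∀ x : V, hV 1 x = x)
    (hVcont : Continuous fun p : G × V => hV p.1 p.2)
    (hEanti : ∀ (g₁ g₂ : G) (x : E), hE (g₁ * g₂) x = hE g₂ (hE g₁ x))
    (hEone : ∀ x : E, hE 1 x = x)
    (hEcont : Continuous fun p : G × E => hE p.1 p.2)
    (γ : V →L[ℝ] E)
    (hequiv : ∀ (g : G) (v : V), γ (hV g v) = hE g (γ v))
    (M : Set E) (ψ : E →L[ℝ] ℝ)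
    (hM : ∀ ε > (0 : ℝ), ∃ U ∈ nhds (1 : G), ∀ u ∈ U, ∀ m ∈ M,
      |ψ (hE u m) - ψ m| ≤ ε) :
    ∀ ε > (0 : ℝ), ∃ U ∈ nhds (1 : G), ∀ u ∈ U, ∀ v ∈ γ ⁻¹' M,
      |(ψ.comp γ) (hV u v) - (ψ.comp γ) v| ≤ ε := by
  intro ε hε
  obtain ⟨U, hU, h⟩ := hM ε hε
  exact ⟨U, hU, fun u hu v hv => by
    simpa [ContinuousLinearMap.comp_apply, hequiv] using h u hu (γ v) hv⟩
end

section
/- Let ω : V × W → ℝ and ω' : V' × W' → ℝ be continuous bilinear maps of normed spaces, and suppose ω' refines ω via continuous linear maps p : V → V', q : W → W' with dense images satisfying ω'(p(v), q(f)) = ω(v,f) for all v, f. If ω is a left strong duality then so is ω'. -/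
/-- A continuous bilinear map on normed spaces is bounded. -/
lemma bilin_exists_bound {V W : Type*} [NormedAddCommGroup V] [NormedSpace ℝ V]
    [NormedAddCommGroup W] [NormedSpace ℝ W] (ω : V →ₗ[ℝ] W →ₗ[ℝ] ℝ)
    (hω : Continuous fun p : V × W => ω p.1 p.2) :
    ∃ C > 0, ∀ (v : V) (w : W), |ω v w| ≤ C * ‖v‖ * ‖w‖ := by
  have h0 : (fun p : V × W => ω p.1 p.2) (0, 0) = 0 := by simp
  have hc : ContinuousAt (fun p : V × W => ω p.1 p.2) (0, 0) := hω.continuousAt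
  rw [Metric.continuousAt_iff] at hc
  obtain ⟨δ, hδ, hδ1⟩ := hc 1 one_pos
  refine ⟨4 / δ ^ 2, by positivity, fun v w => ?_⟩
  rcases eq_or_ne v 0 with rfl | hv
  · simp
  rcases eq_or_ne w 0 with rfl | hw
  · simp
  have hvn : (0:ℝ) < ‖v‖ := norm_pos_iff.mpr hv
  have hwn : (0:ℝ) < ‖w‖ := norm_pos_iff.mpr hw
  set a : V := (δ / (2 * ‖v‖)) • v with ha
  set b : W := (δ / (2 * ‖w‖)) • w with hb
  have hna : ‖a‖ = δ / 2 := by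
    rw [ha, norm_smul, Real.norm_eq_abs, abs_of_pos (by positivity)]
    field_simp
  have hnb : ‖b‖ = δ / 2 := by
    rw [hb, norm_smul, Real.norm_eq_abs, abs_of_pos (by positivity)]
    field_simp
  have hdist : dist ((a, b) : V × W) (0, 0) < δ := by
    rw [Prod.dist_eq]
    simp only [dist_zero_right, hna, hnb]
    simpa using by linarith
  have hsmall : |ω a b| < 1 := by
    have h := hδ1 hdist
    simpa [Real.dist_eq] using h
  have hab : ω a b = (δ / (2 * ‖v‖)) * ((δ / (2 * ‖w‖)) * ω v w) := by
    simp only [ha, hb, map_smul, LinearMap.smul_apply, smul_eq_mul]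
    ring
  rw [hab, abs_mul, abs_mul, abs_of_pos (show (0:ℝ) < δ / (2 * ‖v‖) by positivity),
    abs_of_pos (show (0:ℝ) < δ / (2 * ‖w‖) by positivity)] at hsmall
  have hs2 : δ * δ * |ω v w| < 4 * (‖v‖ * ‖w‖) := by
    field_simp at hsmall
    nlinarith [hsmall]
  have h4 : (0:ℝ) < δ ^ 2 := by positivity
  rw [div_mul_eq_mul_div, div_mul_eq_mul_div, le_div_iff₀ h4]
  nlinarith [abs_nonneg (ω v w)]

/-- If a continuous bilinear map `ω' : V' × W' → ℝ` refines a continuous bilinear map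
`ω : V × W → ℝ` via continuous linear maps `p, q` with dense images satisfying
`ω'(p v, q f) = ω(v,f)`, and `ω` is a left strong duality, then so is `ω'`. -/
theorem left_strong_duality_of_dense_refinement {V W V' W' : Type*}
    [NormedAddCommGroup V] [NormedSpace ℝ V] [NormedAddCommGroup W] [NormedSpace ℝ W]
    [NormedAddCommGroup V'] [NormedSpace ℝ V'] [NormedAddCommGroup W'] [NormedSpace ℝ W']
    (ω : V →ₗ[ℝ] W →ₗ[ℝ] ℝ) (ω' : V' →ₗ[ℝ] W' →ₗ[ℝ] ℝ)
    (hω : Continuous fun p : V × W => ω p.1 p.2)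
    (hω' : Continuous fun p : V' × W' => ω' p.1 p.2)
    (p : V →L[ℝ] V') (q : W →L[ℝ] W')
    (hp : DenseRange ⇑p) (hq : DenseRange ⇑q)
    (href : ∀ (v : V) (f : W), ω' (p v) (q f) = ω v f)
    (hleft : ∀ x : ℕ → V, (∀ r : ℝ, ∃ n, r < ‖x n‖) →
      ∀ r : ℝ, ∃ n, ∃ f : W, ‖f‖ ≤ 1 ∧ r < |ω (x n) f|) :
    ∀ x : ℕ → V', (∀ r : ℝ, ∃ n, r < ‖x n‖) →
      ∀ r : ℝ, ∃ n, ∃ f : W', ‖f‖ ≤ 1 ∧ r < |ω' (x n) f| := by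
  intro x hx r
  obtain ⟨C, hC0, hC⟩ := bilin_exists_bound ω' hω'
  set D : ℝ := max ‖q‖ 1 with hD
  have hD0 : (0:ℝ) < D := lt_of_lt_of_le one_pos (le_max_right _ _)
  set ε : ℝ := 1 / (C * D) with hε
  have hε0 : (0:ℝ) < ε := by positivity
  -- choose approximating sequence v in V
  have hvex : ∀ n, ∃ v : V, dist (x n) (p v) < ε := fun n => hp.exists_dist_lt (x n) hε0
  choose v hv using hvex
  -- v is unbounded
  have hvub : ∀ r' : ℝ, ∃ n, r' < ‖v n‖ := by
    intro r'
    by_cases hp0 : p = 0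
    · obtain ⟨n, hn⟩ := hx ε
      have := hv n
      rw [hp0] at this
      simp only [ContinuousLinearMap.zero_apply, dist_zero_right] at this
      linarith
    · have hpn : (0:ℝ) < ‖p‖ := norm_pos_iff.mpr hp0
      obtain ⟨n, hn⟩ := hx (‖p‖ * r' + ε)
      refine ⟨n, ?_⟩
      have h1 : ‖x n‖ ≤ ‖x n - p (v n)‖ + ‖p (v n)‖ := by
        have := norm_add_le (x n - p (v n)) (p (v n))
        simpa using this
      have h2 : ‖x n - p (v n)‖ < ε := by rw [← dist_eq_norm]; exact hv n
      have h3 : ‖p (v n)‖ ≤ ‖p‖ * ‖v n‖ := p.le_opNorm _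
      have : ‖p‖ * r' < ‖p‖ * ‖v n‖ := by linarith
      exact lt_of_mul_lt_mul_left this hpn.le
  by_cases hq0 : q = 0
  · -- then ω is identically zero, contradicting hleft
    exfalso
    obtain ⟨n, f, _, hf2⟩ := hleft v hvub 0
    have : ω (v n) f = 0 := by
      rw [← href]
      rw [hq0]
      simp
    rw [this] at hf2
    simp at hf2
  · have hqn : (0:ℝ) < ‖q‖ := norm_pos_iff.mpr hq0
    obtain ⟨n, f, hf1, hf2⟩ := hleft v hvub (‖q‖ * r + 1)
    refine ⟨n, ‖q‖⁻¹ • q f, ?_, ?_⟩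
    · rw [norm_smul, Real.norm_eq_abs, abs_of_pos (by positivity)]
      calc ‖q‖⁻¹ * ‖q f‖ ≤ ‖q‖⁻¹ * (‖q‖ * ‖f‖) := by
            exact mul_le_mul_of_nonneg_left (q.le_opNorm f) (by positivity)
        _ = ‖f‖ := by field_simp
        _ ≤ 1 := hf1
    · have herr : |ω' (x n - p (v n)) (q f)| ≤ 1 := by
        calc |ω' (x n - p (v n)) (q f)| ≤ C * ‖x n - p (v n)‖ * ‖q f‖ := hC _ _
          _ ≤ C * ε * D := by
              have h2 : ‖x n - p (v n)‖ ≤ ε := by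
                rw [← dist_eq_norm]; exact (hv n).le
              have h3 : ‖q f‖ ≤ D := le_trans (le_trans (q.le_opNorm f)
                (by nlinarith [norm_nonneg q])) (le_max_left _ _)
              have := mul_le_mul (mul_le_mul_of_nonneg_left h2 hC0.le) h3 (norm_nonneg _)
                (by positivity)
              exact this
          _ = 1 := by rw [hε]; field_simp
      have hkey : ‖q‖ * r < |ω' (x n) (q f)| := by
        have heq : ω' (x n) (q f) = ω' (x n - p (v n)) (q f) + ω (v n) f := by
          rw [← href]
          rw [map_sub]
          simp
        rw [heq]
        have h5 := abs_sub_abs_le_abs_sub (ω (v n) f)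
          (ω' (x n - p (v n)) (q f) + ω (v n) f)
        have h6 : ω (v n) f - (ω' (x n - p (v n)) (q f) + ω (v n) f)
            = -(ω' (x n - p (v n)) (q f)) := by ring
        rw [h6, abs_neg] at h5
        linarith
      have : ω' (x n) (‖q‖⁻¹ • q f) = ‖q‖⁻¹ * ω' (x n) (q f) := by
        rw [map_smul]; simp [smul_eq_mul]
      rw [this, abs_mul, abs_of_pos (show (0:ℝ) < ‖q‖⁻¹ by positivity)]
      calc r = ‖q‖⁻¹ * (‖q‖ * r) := by field_simp
        _ < ‖q‖⁻¹ * |ω' (x n) (q f)| := by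
            exact mul_lt_mul_of_pos_left hkey (by positivity)
end
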